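/- Let n be a positive natural number, let Φ₁, …, Φ_N be bare measurement channels on n×n complex matrices, let Φ = Φ_N ∘ ⋯ ∘ Φ₁, and let Φ* denote the adjoint of Φ with respect to the Hilbert–Schmidt inner product (i.e. Tr(A† Φ(B)) = Tr(Φ*(A)† B) for all A, B). Then there is no invertible complex-linear map 𝒰 on n×n complex matrices such that 𝒰 ∘ Φ* = (−Φ) ∘ 𝒰. (In other words, bare measurement feedback processes are incompatible with Q symmetry with ε_Q = −1.) -/

import Mathlib

open Matrix
open scoped ComplexOrder

/-- The square root of a positive semidefinite matrix, as `Matrix.PosSemidef.sqrt` was defined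
in the older Mathlib (removed since). -/
noncomputable def Matrix.PosSemidef.sqrt {n : Type*} [Fintype n] [DecidableEq n] {A : Matrix n n ℂ}
    (hA : A.PosSemidef) : Matrix n n ℂ :=
  (hA.1.eigenvectorUnitary : Matrix n n ℂ) * diagonal ((↑) ∘ Real.sqrt ∘ hA.1.eigenvalues) *
    (star hA.1.eigenvectorUnitary : Matrix n n ℂ)

lemma Matrix.PosSemidef.posSemidef_sqrt {n : Type*} [Fintype n] [DecidableEq n]
    {A : Matrix n n ℂ} (hA : A.PosSemidef) : hA.sqrt.PosSemidef := by
  have hd : (diagonal ((↑) ∘ Real.sqrt ∘ hA.1.eigenvalues : n → ℂ)).PosSemidef :=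
    posSemidef_diagonal_iff.mpr fun i => by
      simp only [Function.comp_apply]
      exact Complex.zero_le_real.mpr (Real.sqrt_nonneg _)
  have := hd.mul_mul_conjTranspose_same (hA.1.eigenvectorUnitary : Matrix n n ℂ)
  unfold Matrix.PosSemidef.sqrt
  convert this using 2
  exact Matrix.star_eq_conjTranspose _

lemma Matrix.PosSemidef.sqrt_mul_self {n : Type*} [Fintype n] [DecidableEq n]
    {A : Matrix n n ℂ} (hA : A.PosSemidef) : hA.sqrt * hA.sqrt = A := by
  unfold Matrix.PosSemidef.sqrt
  have hU : (star hA.1.eigenvectorUnitary : Matrix n n ℂ) * (hA.1.eigenvectorUnitary : Matrix n n ℂ)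
      = 1 := Unitary.coe_star_mul_self _
  have hD : diagonal ((↑) ∘ Real.sqrt ∘ hA.1.eigenvalues : n → ℂ)
      * diagonal ((↑) ∘ Real.sqrt ∘ hA.1.eigenvalues : n → ℂ)
      = diagonal (RCLike.ofReal ∘ hA.1.eigenvalues) := by
    rw [diagonal_mul_diagonal]
    congr 1
    funext i
    simp only [Function.comp_apply]
    rw [← Complex.ofReal_mul, Real.mul_self_sqrt (hA.eigenvalues_nonneg i)]
    rfl
  conv_rhs => rw [hA.1.spectral_theorem, Unitary.conjStarAlgAut_apply]
  rw [← hD]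
  simp only [Matrix.mul_assoc]
  rw [← Matrix.mul_assoc (star _ : Matrix n n ℂ) _ _, hU, Matrix.one_mul]

/-- A bare measurement channel: `Φ(ρ) = Σ_α √E_α ρ √E_α` for some POVM `(E_α)`. -/
def IsBareChannel {n : ℕ}
    (Φ : Matrix (Fin n) (Fin n) ℂ → Matrix (Fin n) (Fin n) ℂ) : Prop :=
  ∃ (k : ℕ) (E : Fin k → Matrix (Fin n) (Fin n) ℂ)
    (hE : ∀ α, (E α).PosSemidef),
      (∑ α, E α) = 1 ∧ ∀ ρ, Φ ρ = ∑ α, (hE α).sqrt * ρ * (hE α).sqrt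

namespace Stmt11Aux

variable {n : ℕ}

/-- Hilbert–Schmidt inner product. -/
noncomputable def ip (A B : Matrix (Fin n) (Fin n) ℂ) : ℂ := (Aᴴ * B).trace

/-- Squared Frobenius norm. -/
noncomputable def nn (A : Matrix (Fin n) (Fin n) ℂ) : ℝ := (ip A A).re

lemma ip_self_eq (A : Matrix (Fin n) (Fin n) ℂ) :
    ip A A = ((∑ i, ∑ j, Complex.normSq (A j i) : ℝ) : ℂ) := by
  simp only [ip, Matrix.trace, Matrix.diag_apply, Matrix.mul_apply,
    Matrix.conjTranspose_apply]
  push_cast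
  refine Finset.sum_congr rfl fun i _ => Finset.sum_congr rfl fun j _ => ?_
  rw [Complex.star_def, mul_comm, Complex.mul_conj]

lemma ip_self_im (A : Matrix (Fin n) (Fin n) ℂ) : (ip A A).im = 0 := by
  rw [ip_self_eq]; simp

lemma ip_self_coe (A : Matrix (Fin n) (Fin n) ℂ) : ip A A = ((nn A : ℝ) : ℂ) := by
  rw [Complex.ext_iff]; constructor
  · simp [nn]
  · simp [ip_self_im]

lemma nn_nonneg (A : Matrix (Fin n) (Fin n) ℂ) : 0 ≤ nn A := by
  have h := ip_self_eq A
  have h2 : nn A = ∑ i, ∑ j, Complex.normSq (A j i) := by simp [nn, h]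
  rw [h2]
  exact Finset.sum_nonneg fun i _ => Finset.sum_nonneg fun j _ => Complex.normSq_nonneg _

lemma eq_zero_of_nn_eq_zero {A : Matrix (Fin n) (Fin n) ℂ} (h : nn A = 0) : A = 0 := by
  have h2 : (∑ i, ∑ j, Complex.normSq (A j i) : ℝ) = 0 := by
    have := ip_self_eq A
    simpa [nn, this] using h
  ext i j
  have h3 : ∀ i ∈ Finset.univ, (0:ℝ) ≤ ∑ j, Complex.normSq (A j i) :=
    fun i _ => Finset.sum_nonneg fun j _ => Complex.normSq_nonneg _
  have h4 := (Finset.sum_eq_zero_iff_of_nonneg h3).1 h2 j (Finset.mem_univ _)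
  have h5 := (Finset.sum_eq_zero_iff_of_nonneg
    (fun k _ => Complex.normSq_nonneg (A k j))).1 h4 i (Finset.mem_univ _)
  simpa using Complex.normSq_eq_zero.1 h5

lemma ip_conj (A B : Matrix (Fin n) (Fin n) ℂ) : ip B A = starRingEnd ℂ (ip A B) := by
  simp only [ip]
  rw [← Complex.star_def, ← Matrix.trace_conjTranspose]
  simp [Matrix.conjTranspose_mul]

lemma ip_add_left (A B C : Matrix (Fin n) (Fin n) ℂ) :
    ip (A + B) C = ip A C + ip B C := by simp [ip, Matrix.add_mul]

lemma ip_add_right (A B C : Matrix (Fin n) (Fin n) ℂ) :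
    ip A (B + C) = ip A B + ip A C := by simp [ip, Matrix.mul_add]

lemma ip_sub_left (A B C : Matrix (Fin n) (Fin n) ℂ) :
    ip (A - B) C = ip A C - ip B C := by simp [ip, Matrix.sub_mul]

lemma ip_sub_right (A B C : Matrix (Fin n) (Fin n) ℂ) :
    ip A (B - C) = ip A B - ip A C := by simp [ip, Matrix.mul_sub]

lemma ip_smul_right (c : ℂ) (A B : Matrix (Fin n) (Fin n) ℂ) :
    ip A (c • B) = c * ip A B := by simp [ip]

lemma ip_smul_left (c : ℂ) (A B : Matrix (Fin n) (Fin n) ℂ) :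
    ip (c • A) B = starRingEnd ℂ c * ip A B := by
  simp [ip, Matrix.conjTranspose_smul]

lemma nn_neg (A : Matrix (Fin n) (Fin n) ℂ) : nn (-A) = nn A := by
  simp [nn, ip, Matrix.conjTranspose_neg, Matrix.neg_mul, Matrix.mul_neg]

/-- Cauchy–Schwarz for the positive semidefinite form `(y, z) ↦ ip y (T z)`. -/
lemma cs_abstract (T : Matrix (Fin n) (Fin n) ℂ → Matrix (Fin n) (Fin n) ℂ)
    (hadd : ∀ x y, T (x + y) = T x + T y)
    (hsmul : ∀ (t : ℝ) x, T ((t : ℂ) • x) = (t : ℂ) • T x)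
    (hsa : ∀ a b, ip (T a) b = ip a (T b))
    (hpos : ∀ a, 0 ≤ (ip a (T a)).re) :
    ∀ y z, ((ip y (T z)).re)^2 ≤ (ip y (T y)).re * (ip z (T z)).re := by
  intro y z
  have hzy : ip z (T y) = starRingEnd ℂ (ip y (T z)) := by
    rw [← hsa z y, ip_conj]
  have hq : ∀ t : ℝ, 0 ≤ (ip z (T z)).re * (t * t)
      + (2 * (ip y (T z)).re) * t + (ip y (T y)).re := by
    intro t
    have hexp : ip (y + (t:ℂ) • z) (T (y + (t:ℂ) • z))
        = ip y (T y) + (t:ℂ) * ip y (T z) + (t:ℂ) * ip z (T y)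
          + (t:ℂ) * (t:ℂ) * ip z (T z) := by
      rw [hadd, hsmul, ip_add_left, ip_add_right, ip_add_right]
      simp only [ip_smul_left, ip_smul_right, Complex.conj_ofReal]
      ring
    have h0 := hpos (y + (t:ℂ) • z)
    rw [hexp, hzy] at h0
    simp only [← Complex.ofReal_mul, Complex.add_re, Complex.mul_re, Complex.ofReal_re,
      Complex.ofReal_im, Complex.conj_re, Complex.conj_im, zero_mul, sub_zero, mul_zero,
      zero_sub] at h0 ⊢
    nlinarith [h0]
  have hd := discrim_le_zero hq
  simp only [discrim] at hd
  nlinarith [hd]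

/-- The properties of (compositions of) bare measurement channels that we need. -/
structure Good (T : Matrix (Fin n) (Fin n) ℂ → Matrix (Fin n) (Fin n) ℂ) : Prop where
  tr : ∀ ρ, (T ρ).trace = ρ.trace
  contr : ∀ y, nn (T y) ≤ nn y
  fix : ∀ y, nn (T y) = nn y → T y = y

lemma good_id : Good (id : Matrix (Fin n) (Fin n) ℂ → Matrix (Fin n) (Fin n) ℂ) :=
  ⟨fun _ => rfl, fun _ => le_refl _, fun _ _ => rfl⟩

lemma Good.comp {f g : Matrix (Fin n) (Fin n) ℂ → Matrix (Fin n) (Fin n) ℂ}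
    (hf : Good f) (hg : Good g) : Good (g ∘ f) := by
  constructor
  · intro ρ; simp [hg.tr, hf.tr]
  · intro y; exact le_trans (hg.contr _) (hf.contr _)
  · intro y h
    have h1 : nn (f y) = nn y := le_antisymm (hf.contr y) (by
      calc nn y = nn (g (f y)) := h.symm
        _ ≤ nn (f y) := hg.contr _)
    have h2 : f y = y := hf.fix y h1
    simp only [Function.comp_apply, h2] at h ⊢
    exact hg.fix y h

lemma good_foldl (l : List (Matrix (Fin n) (Fin n) ℂ → Matrix (Fin n) (Fin n) ℂ))
    (hl : ∀ T ∈ l, Good T)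
    (f : Matrix (Fin n) (Fin n) ℂ → Matrix (Fin n) (Fin n) ℂ) (hf : Good f) :
    Good (l.foldl (fun f g => g ∘ f) f) := by
  induction l generalizing f with
  | nil => exact hf
  | cons T l ih =>
    exact ih (fun S hS => hl S (List.mem_cons_of_mem _ hS)) _
      (hf.comp (hl T (List.mem_cons_self)))

lemma good_of_bare {T : Matrix (Fin n) (Fin n) ℂ → Matrix (Fin n) (Fin n) ℂ}
    (hT : IsBareChannel T) : Good T := by
  obtain ⟨k, E, hE, hsum, hform⟩ := hT
  set K : Fin k → Matrix (Fin n) (Fin n) ℂ := fun α => (hE α).sqrt with hKdef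
  have hKh : ∀ α, (K α)ᴴ = K α := fun α => (hE α).posSemidef_sqrt.1
  have hK2 : ∑ α, K α * K α = 1 := by
    calc ∑ α, K α * K α = ∑ α, E α :=
          Finset.sum_congr rfl fun α _ => (hE α).sqrt_mul_self
      _ = 1 := hsum
  set L : Fin k → Matrix (Fin n) (Fin n) ℂ := fun α => (hE α).posSemidef_sqrt.sqrt
    with hLdef
  have hLh : ∀ α, (L α)ᴴ = L α := fun α => (hE α).posSemidef_sqrt.posSemidef_sqrt.1
  have hL2 : ∀ α, L α * L α = K α := fun α => (hE α).posSemidef_sqrt.sqrt_mul_self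
  -- trace preservation
  have htr : ∀ ρ, (T ρ).trace = ρ.trace := by
    intro ρ
    rw [hform, Matrix.trace_sum]
    calc ∑ α, (K α * ρ * K α).trace
        = ∑ α, ((K α * K α) * ρ).trace := by
          refine Finset.sum_congr rfl fun α _ => ?_
          rw [Matrix.trace_mul_cycle]
      _ = ((∑ α, K α * K α) * ρ).trace := by rw [← Matrix.trace_sum, ← Finset.sum_mul]
      _ = ρ.trace := by rw [hK2, one_mul]
  -- self-adjointness
  have hsa : ∀ a b, ip (T a) b = ip a (T b) := by
    intro a b
    simp only [ip, hform, Matrix.conjTranspose_sum, Finset.sum_mul, Finset.mul_sum,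
      Matrix.trace_sum]
    refine Finset.sum_congr rfl fun α _ => ?_
    simp only [Matrix.conjTranspose_mul, hKh, Matrix.mul_assoc]
    rw [(hE α).posSemidef_sqrt.1]
    conv_lhs => rw [Matrix.trace_mul_comm]
    simp only [Matrix.mul_assoc]
  -- value of the quadratic form, hence positivity and realness
  have hselfsum : ∀ a, ip a (T a) = ((∑ α, nn (L α * a * L α) : ℝ) : ℂ) := by
    intro a
    simp only [ip, hform, Finset.mul_sum, Matrix.trace_sum]
    push_cast
    refine Finset.sum_congr rfl fun α _ => ?_
    have h1 : (aᴴ * (K α * a * K α)).trace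
        = ((L α * a * L α)ᴴ * (L α * a * L α)).trace := by
      rw [← hL2 α]
      simp only [Matrix.conjTranspose_mul, hLh, Matrix.mul_assoc]
      conv_rhs => rw [Matrix.trace_mul_comm]
      simp only [Matrix.mul_assoc]
    calc (aᴴ * (K α * a * K α)).trace
        = ip (L α * a * L α) (L α * a * L α) := h1
      _ = ((nn (L α * a * L α) : ℝ) : ℂ) := ip_self_coe _
  have hpos : ∀ a, 0 ≤ (ip a (T a)).re := by
    intro a
    rw [hselfsum]
    simpa using Finset.sum_nonneg fun α (_ : α ∈ Finset.univ) => nn_nonneg (L α * a * L α)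
  -- upper bound  ⟨a, T a⟩ ≤ ⟨a, a⟩
  have hbnd : ∀ a, (ip a (T a)).re ≤ nn a := by
    intro a
    have expand : ∀ α : Fin k, ((nn (K α * a - a * K α) : ℝ) : ℂ)
        = (aᴴ * ((K α * K α) * a)).trace + (aᴴ * (a * (K α * K α))).trace
          - 2 * (aᴴ * (K α * a * K α)).trace := by
      intro α
      rw [← ip_self_coe]
      have e1 : ip (K α * a) (K α * a) = (aᴴ * ((K α * K α) * a)).trace := by
        simp only [ip, Matrix.conjTranspose_mul, hKh, Matrix.mul_assoc]
      have e2 : ip (a * K α) (a * K α) = (aᴴ * (a * (K α * K α))).trace := by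
        simp only [ip, Matrix.conjTranspose_mul, hKh, Matrix.mul_assoc]
        conv_lhs => rw [Matrix.trace_mul_comm]
        simp only [Matrix.mul_assoc]
      have e3 : ip (K α * a) (a * K α) = (aᴴ * (K α * a * K α)).trace := by
        simp only [ip, Matrix.conjTranspose_mul, hKh, Matrix.mul_assoc]
      have e4 : ip (a * K α) (K α * a) = (aᴴ * (K α * a * K α)).trace := by
        simp only [ip, Matrix.conjTranspose_mul, hKh, Matrix.mul_assoc]
        conv_lhs => rw [Matrix.trace_mul_comm]
        simp only [Matrix.mul_assoc]
      rw [ip_sub_left, ip_sub_right, ip_sub_right, e1, e2, e3, e4]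
      ring
    have s1 : ∑ α, (aᴴ * ((K α * K α) * a)).trace = ip a a := by
      rw [← Matrix.trace_sum, ← Finset.mul_sum, ← Finset.sum_mul, hK2, one_mul, ip]
    have s2 : ∑ α, (aᴴ * (a * (K α * K α))).trace = ip a a := by
      rw [← Matrix.trace_sum, ← Finset.mul_sum, ← Finset.mul_sum, hK2, Matrix.mul_one, ip]
    have s3 : ∑ α, (aᴴ * (K α * a * K α)).trace = ip a (T a) := by
      rw [← Matrix.trace_sum, ← Finset.mul_sum, ip, hform]
    have key : (((∑ α, nn (K α * a - a * K α) : ℝ)) : ℂ)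
        = 2 * ip a a - 2 * ip a (T a) := by
      push_cast
      rw [Finset.sum_congr rfl (fun α _ => expand α), Finset.sum_sub_distrib,
        Finset.sum_add_distrib, s1, s2, ← Finset.mul_sum, s3]
      ring
    have hsumnn : (0:ℝ) ≤ (∑ α, nn (K α * a - a * K α) : ℝ) :=
      Finset.sum_nonneg fun α _ => nn_nonneg _
    have hkre := congrArg Complex.re key
    rw [Complex.ofReal_re] at hkre
    have hip := ip_self_coe a
    rw [hip] at hkre
    simp only [Complex.sub_re, Complex.mul_re, Complex.ofReal_re, Complex.ofReal_im,
      Complex.re_ofNat, Complex.im_ofNat, zero_mul, sub_zero, mul_zero] at hkre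
    have := hkre
    nlinarith [hsumnn, this]
  -- linearity
  have hadd : ∀ x y, T (x + y) = T x + T y := by
    intro x y
    rw [hform, hform, hform, ← Finset.sum_add_distrib]
    exact Finset.sum_congr rfl fun α _ => by
      rw [Matrix.mul_add, Matrix.add_mul]
  have hsmul : ∀ (t : ℝ) x, T ((t : ℂ) • x) = (t : ℂ) • T x := by
    intro t x
    rw [hform, hform, Finset.smul_sum]
    exact Finset.sum_congr rfl fun α _ => by
      rw [Matrix.mul_smul, Matrix.smul_mul]
  have hcs := cs_abstract T hadd hsmul hsa hpos
  -- contraction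
  have hcontr : ∀ y, nn (T y) ≤ nn y := by
    intro y
    rcases eq_or_lt_of_le (nn_nonneg (T y)) with h0 | h0
    · rw [← h0]; exact nn_nonneg y
    · have hb : (ip y (T (T y))).re = nn (T y) := by rw [← hsa y (T y)]; rfl
      have h4 := hcs y (T y)
      rw [hb] at h4
      have h1 := hbnd (T y)
      have h2 := hbnd y
      have h3 := hpos y
      nlinarith
  refine ⟨htr, hcontr, ?_⟩
  -- equality case
  intro y hy
  rcases eq_or_lt_of_le (nn_nonneg y) with h0 | h0
  · have hy0 : y = 0 := eq_zero_of_nn_eq_zero h0.symm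
    rw [hy0, hform]
    simp
  · have hpos' : 0 < nn (T y) := by rw [hy]; exact h0
    have hb : (ip y (T (T y))).re = nn (T y) := by rw [← hsa y (T y)]; rfl
    have hcs' := hcs y (T y)
    rw [hb] at hcs'
    have h1 := hbnd (T y)
    have h2 := hbnd y
    have h3 := hpos y
    have hr : (ip y (T y)).re = nn y := by nlinarith
    have hTyy : ip (T y) y = ip y (T y) := hsa y y
    have hexp : nn (T y - y) = nn (T y) - 2 * (ip y (T y)).re + nn y := by
      simp only [nn, ip_sub_left, ip_sub_right, hTyy, Complex.sub_re, Complex.add_re]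
      ring
    have hz : nn (T y - y) = 0 := by rw [hexp, hy, hr]; ring
    have := eq_zero_of_nn_eq_zero hz
    exact sub_eq_zero.mp this

end Stmt11Aux
theorem stmt_11 (n N : ℕ) (hn : 0 < n)
    (Φs : Fin N → (Matrix (Fin n) (Fin n) ℂ → Matrix (Fin n) (Fin n) ℂ))
    (hbare : ∀ i, IsBareChannel (Φs i))
    (Φ : Matrix (Fin n) (Fin n) ℂ → Matrix (Fin n) (Fin n) ℂ)
    (hΦ : Φ = (List.ofFn Φs).foldl (fun f g => g ∘ f) id)
    (Φstar : Matrix (Fin n) (Fin n) ℂ → Matrix (Fin n) (Fin n) ℂ)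
    (hΦstar : ∀ A B, (Aᴴ * Φ B).trace = ((Φstar A)ᴴ * B).trace) :
    ¬ ∃ U : Matrix (Fin n) (Fin n) ℂ →ₗ[ℂ] Matrix (Fin n) (Fin n) ℂ,
        Function.Bijective U ∧ ∀ ρ, U (Φstar ρ) = -(Φ (U ρ)) := by
  rintro ⟨U, ⟨hinj, -⟩, hcomm⟩
  have hGood : Stmt11Aux.Good Φ := by
    rw [hΦ]
    refine Stmt11Aux.good_foldl _ ?_ _ Stmt11Aux.good_id
    intro T hTmem
    obtain ⟨i, rfl⟩ := Set.mem_range.mp ((List.mem_ofFn' Φs T).mp hTmem)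
    exact Stmt11Aux.good_of_bare (hbare i)
  -- the adjoint is unital
  have hstar1 : Φstar 1 = 1 := by
    have hD : ∀ B, Stmt11Aux.ip (Φstar 1 - 1) B = 0 := by
      intro B
      rw [Stmt11Aux.ip_sub_left]
      have h1 : Stmt11Aux.ip (Φstar 1) B = B.trace := by
        simp only [Stmt11Aux.ip]
        rw [← hΦstar, Matrix.conjTranspose_one, one_mul, hGood.tr]
      have h2 : Stmt11Aux.ip 1 B = B.trace := by
        simp [Stmt11Aux.ip]
      rw [h1, h2, sub_self]
    have hz : Stmt11Aux.nn (Φstar 1 - 1) = 0 := by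
      have := hD (Φstar 1 - 1)
      simp [Stmt11Aux.nn, this]
    exact sub_eq_zero.mp (Stmt11Aux.eq_zero_of_nn_eq_zero hz)
  have hx := hcomm 1
  rw [hstar1] at hx
  -- hx : U 1 = -(Φ (U 1))
  have hPX : Φ (U 1) = -(U 1) := neg_eq_iff_eq_neg.mp hx.symm
  have hnn : Stmt11Aux.nn (Φ (U 1)) = Stmt11Aux.nn (U 1) := by
    rw [hPX, Stmt11Aux.nn_neg]
  have hfix : Φ (U 1) = U 1 := hGood.fix (U 1) hnn
  have hXX : U 1 = -(U 1) := hfix.symm.trans hPX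
  have hX0 : U 1 = 0 := by
    have h2 : U 1 + U 1 = 0 := by
      nth_rewrite 2 [hXX]
      exact add_neg_cancel (U 1)
    have h3 : (2 : ℂ) • U 1 = 0 := by rw [two_smul]; exact h2
    rcases smul_eq_zero.mp h3 with h | h
    · exact absurd h two_ne_zero
    · exact h
  have h10 : (1 : Matrix (Fin n) (Fin n) ℂ) = 0 := by
    apply hinj
    rw [map_zero]
    exact hX0
  have hcontra : (1 : Matrix (Fin n) (Fin n) ℂ) ⟨0, hn⟩ ⟨0, hn⟩ = 0 := by
    rw [h10]; rfl
  rw [Matrix.one_apply_eq] at hcontra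
  exact one_ne_zero hcontra
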